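/- Let G be a graph on vertex set [N] and let H be the step-up of G. Then the independence number of H satisfies α(H) ≤ N^{α(G)} + 1. -/

import Mathlib

/-- For distinct binary sequences, the first position where they differ. -/
noncomputable def delta {N : ℕ} (a b : Fin N → Bool) : ℕ :=
  sInf {i : ℕ | ∃ h : i < N, a ⟨i, h⟩ ≠ b ⟨i, h⟩}

/-- The lexicographic order on binary sequences. -/
def lexLt {N : ℕ} (a b : Fin N → Bool) : Prop :=
  ∃ h : delta a b < N, a ⟨delta a b, h⟩ < b ⟨delta a b, h⟩

/-- For `a ≺ b ≺ c`, the triple `{a,b,c}` is an edge of the step-up of `G` iff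
`δ(a,b) < δ(b,c)` and `{δ(a,b), δ(b,c)}` is an edge of `G`. -/
def stepEdge {N : ℕ} (G : SimpleGraph (Fin N)) (a b c : Fin N → Bool) : Prop :=
  delta a b < delta b c ∧
    ∃ (h1 : delta a b < N) (h2 : delta b c < N),
      G.Adj ⟨delta a b, h1⟩ ⟨delta b c, h2⟩

/-- The independence number of `G`: the largest size of an independent set. -/
noncomputable def indepNum {N : ℕ} (G : SimpleGraph (Fin N)) : ℕ :=
  sSup {n : ℕ | ∃ T : Finset (Fin N), T.card = n ∧ ∀ u ∈ T, ∀ v ∈ T, ¬ G.Adj u v}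

section Aux

variable {N : ℕ} {a b c : Fin N → Bool}

lemma delta_mem (hab : a ≠ b) :
    ∃ h : delta a b < N, a ⟨delta a b, h⟩ ≠ b ⟨delta a b, h⟩ := by
  have hne : {i : ℕ | ∃ h : i < N, a ⟨i, h⟩ ≠ b ⟨i, h⟩}.Nonempty := by
    rcases Function.ne_iff.mp hab with ⟨i, hi⟩
    exact ⟨i.1, i.2, by simpa using hi⟩
  exact Nat.sInf_mem hne

lemma delta_lt (hab : a ≠ b) : delta a b < N := (delta_mem hab).1

lemma delta_eq_below {j : ℕ} (hj : j < N) (h : j < delta a b) :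
    a ⟨j, hj⟩ = b ⟨j, hj⟩ := by
  by_contra hne
  have hm : j ∈ {i : ℕ | ∃ h : i < N, a ⟨i, h⟩ ≠ b ⟨i, h⟩} := ⟨hj, hne⟩
  have := Nat.sInf_le hm
  change delta a b ≤ j at this
  omega

lemma delta_comm : delta a b = delta b a := by
  unfold delta; congr 1; ext i
  exact ⟨fun ⟨h, hn⟩ => ⟨h, hn.symm⟩, fun ⟨h, hn⟩ => ⟨h, hn.symm⟩⟩

lemma delta_eq_of {d : ℕ} (hd : d < N) (hne : a ⟨d, hd⟩ ≠ b ⟨d, hd⟩)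
    (hbelow : ∀ j (hj : j < N), j < d → a ⟨j, hj⟩ = b ⟨j, hj⟩) : delta a b = d := by
  have hm : d ∈ {i : ℕ | ∃ h : i < N, a ⟨i, h⟩ ≠ b ⟨i, h⟩} := ⟨hd, hne⟩
  have h1 : delta a b ≤ d := Nat.sInf_le hm
  rcases lt_or_eq_of_le h1 with h2 | h2
  · obtain ⟨hlt, hne'⟩ := delta_mem (show a ≠ b from fun he => hne (by rw [he]))
    exact absurd (hbelow _ hlt h2) hne'
  · exact h2

lemma lexLt_ne (h : lexLt a b) : a ≠ b := by
  rintro rfl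
  obtain ⟨h1, h2⟩ := h
  exact absurd h2 (lt_irrefl _)

lemma lex_total (hab : a ≠ b) : lexLt a b ∨ lexLt b a := by
  obtain ⟨h, hne⟩ := delta_mem hab
  have hc : delta b a = delta a b := delta_comm
  rcases (show ∀ x y : Bool, x ≠ y → x < y ∨ y < x by decide) _ _ hne with hlt | hgt
  · exact Or.inl ⟨h, hlt⟩
  · refine Or.inr ⟨hc ▸ h, ?_⟩
    · simp only [hc]; exact hgt

/-- The key merging lemma: for a lex-increasing triple, the two deltas differ and the
outer delta is their min. -/
lemma delta_step (hab : lexLt a b) (hbc : lexLt b c) :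
    delta a b ≠ delta b c ∧ delta a c = min (delta a b) (delta b c) ∧ lexLt a c := by
  obtain ⟨h1, hab'⟩ := hab
  obtain ⟨h2, hbc'⟩ := hbc
  have hne : delta a b ≠ delta b c := by
    intro he
    have e1 := Bool.lt_iff.mp hab'
    have e2 := Bool.lt_iff.mp hbc'
    have : b ⟨delta a b, h1⟩ = b ⟨delta b c, h2⟩ := by congr 1; exact Fin.ext he
    rw [this, e2.1] at e1
    exact absurd e1.2 (by decide)
  rcases lt_or_gt_of_ne hne with hlt | hgt
  · have hbceq : ∀ j (hj : j < N), j ≤ delta a b → b ⟨j, hj⟩ = c ⟨j, hj⟩ :=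
      fun j hj hle => delta_eq_below hj (lt_of_le_of_lt hle hlt)
    have hd : delta a c = delta a b := by
      refine delta_eq_of h1 ?_ ?_
      · rw [← hbceq _ h1 le_rfl]; exact ne_of_lt hab'
      · intro j hj hjlt
        rw [delta_eq_below hj hjlt, hbceq _ hj (le_of_lt hjlt)]
    refine ⟨hne, by rw [hd, min_eq_left (le_of_lt hlt)], ?_⟩
    refine ⟨hd ▸ h1, ?_⟩
    have : c ⟨delta a c, hd ▸ h1⟩ = b ⟨delta a c, hd ▸ h1⟩ := by
      rw [← hbceq _ (hd ▸ h1) (le_of_eq (by rw [hd]))]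
    rw [this]
    simp only [hd] at *
    exact hab'
  · have habeq : ∀ j (hj : j < N), j ≤ delta b c → a ⟨j, hj⟩ = b ⟨j, hj⟩ :=
      fun j hj hle => delta_eq_below hj (lt_of_le_of_lt hle hgt)
    have hd : delta a c = delta b c := by
      refine delta_eq_of h2 ?_ ?_
      · rw [habeq _ h2 le_rfl]; exact ne_of_lt hbc'
      · intro j hj hjlt
        rw [habeq _ hj (le_of_lt hjlt), delta_eq_below hj hjlt]
    refine ⟨hne, by rw [hd, min_eq_right (le_of_lt hgt)], ?_⟩
    refine ⟨hd ▸ h2, ?_⟩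
    have : a ⟨delta a c, hd ▸ h2⟩ = b ⟨delta a c, hd ▸ h2⟩ :=
      habeq _ (hd ▸ h2) (le_of_eq (by rw [hd]))
    rw [this]
    simp only [hd] at *
    exact hbc'

lemma lexLt_trans (hab : lexLt a b) (hbc : lexLt b c) : lexLt a c :=
  (delta_step hab hbc).2.2

lemma lexLt_irrefl : ¬ lexLt a a := fun ⟨_, h⟩ => absurd h (lt_irrefl _)

lemma lexLt_asymm (hab : lexLt a b) : ¬ lexLt b a :=
  fun h => lexLt_irrefl (lexLt_trans hab h)

end Aux

/-- The auxiliary total order used for sorting. -/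
def rle {N : ℕ} (a b : Fin N → Bool) : Prop := ¬ lexLt b a

noncomputable instance {N : ℕ} : DecidableRel (rle (N := N)) := fun _ _ => Classical.dec _

instance {N : ℕ} : IsTrans (Fin N → Bool) rle := by
  constructor
  intro a b c hab hbc hca
  rcases eq_or_ne a b with rfl | hne1
  · exact hbc hca
  rcases eq_or_ne b c with rfl | hne2
  · exact hab hca
  have h1 : lexLt a b := (lex_total hne1).resolve_right hab
  have h2 : lexLt b c := (lex_total hne2).resolve_right hbc
  exact lexLt_irrefl (lexLt_trans (lexLt_trans h1 h2) hca)

instance {N : ℕ} : IsAntisymm (Fin N → Bool) rle := by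
  constructor
  intro a b hab hba
  by_contra hne
  rcases lex_total hne with h | h
  · exact hba h
  · exact hab h

instance {N : ℕ} : IsTotal (Fin N → Bool) rle := by
  constructor
  intro a b
  by_contra h
  push_neg at h
  obtain ⟨h1, h2⟩ := h
  simp only [rle, not_not] at h1 h2
  exact lexLt_asymm h1 h2

/-- The sorted enumeration of a finset of binary sequences. -/
lemma exists_lex_enum {N : ℕ} (S : Finset (Fin N → Bool)) :
    ∃ g : ℕ → (Fin N → Bool), (∀ t, t < S.card → g t ∈ S) ∧
      (∀ i j, i < j → j < S.card → lexLt (g i) (g j)) := by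
  classical
  set L := Finset.sort S rle with hL
  have hLlen : L.length = S.card := Finset.length_sort rle
  have hsort : List.Pairwise rle L := Finset.pairwise_sort S rle
  have hnodup : L.Nodup := Finset.sort_nodup S rle
  refine ⟨fun t => L.getD t (fun _ => false), ?_, ?_⟩
  · intro t ht
    show L.getD t (fun _ => false) ∈ S
    rw [List.getD_eq_getElem _ _ (by omega)]
    exact Finset.mem_sort rle |>.mp (List.getElem_mem _)
  · intro i j hij hj
    have hi' : i < L.length := by omega
    have hj' : j < L.length := by omega
    show lexLt (L.getD i (fun _ => false)) (L.getD j (fun _ => false))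
    rw [List.getD_eq_getElem _ _ hi', List.getD_eq_getElem _ _ hj']
    have hr : rle (L.get ⟨i, hi'⟩) (L.get ⟨j, hj'⟩) :=
      hsort.rel_get_of_lt (show (⟨i, hi'⟩ : Fin L.length) < ⟨j, hj'⟩ from hij)
    have hne : L[i] ≠ L[j] := by
      intro he
      have h2 : (⟨i, hi'⟩ : Fin L.length) = ⟨j, hj'⟩ :=
        (hnodup.get_inj_iff).mp (by simpa [List.get_eq_getElem] using he)
      have := Fin.mk.injEq .. ▸ h2
      omega
    simp only [List.get_eq_getElem] at hr
    exact (lex_total hne).resolve_right hr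

/-- The sequence of consecutive deltas along an enumeration. -/
noncomputable def Dd {N : ℕ} (g : ℕ → Fin N → Bool) (t : ℕ) : ℕ :=
  delta (g t) (g (t + 1))

section Chain

variable {N m : ℕ} {g : ℕ → Fin N → Bool}

/-- If `Dd g p` is minimal among `Dd g t` for `t ∈ [p, q)`, then `delta (g p) (g q) = Dd g p`. -/
lemma chain_delta_eq (hg : ∀ i j, i < j → j < m → lexLt (g i) (g j))
    (p q : ℕ) (hpq : p < q) (hq : q < m)
    (hmin : ∀ t, p < t → t < q → Dd g p ≤ Dd g t) :
    delta (g p) (g q) = Dd g p := by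
  have key : ∀ n, p + 1 + n < m → (∀ t, p < t → t < p + 1 + n → Dd g p ≤ Dd g t) →
      delta (g p) (g (p + 1 + n)) = Dd g p := by
    intro n
    induction n with
    | zero => intro _ _; simp [Dd]
    | succ n ih =>
      intro hlt hmin'
      have e : p + 1 + (n + 1) = (p + 1 + n) + 1 := by omega
      rw [e]
      have h1 : lexLt (g p) (g (p + 1 + n)) := hg p _ (by omega) (by omega)
      have h2 : lexLt (g (p + 1 + n)) (g ((p + 1 + n) + 1)) := hg _ _ (by omega) (by omega)
      have hmerge := (delta_step h1 h2).2.1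
      rw [hmerge, ih (by omega) (fun t ht1 ht2 => hmin' t ht1 (by omega))]
      have : Dd g p ≤ delta (g (p + 1 + n)) (g ((p + 1 + n) + 1)) :=
        hmin' (p + 1 + n) (by omega) (by omega)
      omega
  have e : q = p + 1 + (q - p - 1) := by omega
  rw [e] at hq hmin ⊢
  exact key _ hq hmin

end Chain

open Classical in
/-- The finset of delta-values of "visible minima" positions for index `i`. -/
noncomputable def Phi {N : ℕ} (g : ℕ → Fin N → Bool) (i : ℕ) : Finset ℕ :=
  ((Finset.range (i + 1)).filter (fun p => ∀ t, p < t → t ≤ i → Dd g p < Dd g t)).image (Dd g)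

lemma mem_Phi {N : ℕ} {g : ℕ → Fin N → Bool} {i x : ℕ} :
    x ∈ Phi g i ↔ ∃ p, p ≤ i ∧ (∀ t, p < t → t ≤ i → Dd g p < Dd g t) ∧ Dd g p = x := by
  classical
  simp [Phi, Nat.lt_succ_iff]
  constructor
  · rintro ⟨p, ⟨h1, h2⟩, h3⟩; exact ⟨p, h1, h2, h3⟩
  · rintro ⟨p, h1, h2, h3⟩; exact ⟨p, ⟨h1, h2⟩, h3⟩

lemma self_mem_Phi {N : ℕ} {g : ℕ → Fin N → Bool} {i : ℕ} : Dd g i ∈ Phi g i :=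
  mem_Phi.mpr ⟨i, le_rfl, fun t ht1 ht2 => absurd (lt_of_lt_of_le ht1 ht2) (lt_irrefl _), rfl⟩

/-- The padding-based encoding of a finset of naturals as a function. -/
noncomputable def enc (s : Finset ℕ) : ℕ → ℕ :=
  fun j => s.toList.getD j s.toList.headI

lemma enc_mem {s : Finset ℕ} (hne : s.Nonempty) (j : ℕ) : enc s j ∈ s := by
  unfold enc
  rcases lt_or_ge j s.toList.length with h | h
  · rw [List.getD_eq_getElem _ _ h]
    exact Finset.mem_toList.mp (List.getElem_mem _)
  · rw [List.getD_eq_default _ _ h]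
    have hlne : s.toList ≠ [] := by
      intro he
      rw [Finset.toList_eq_nil] at he
      subst he
      exact Finset.not_nonempty_empty hne
    rcases List.exists_cons_of_ne_nil hlne with ⟨a, t, he⟩
    rw [he]
    simp only [List.headI]
    exact Finset.mem_toList.mp (he ▸ List.mem_cons_self (a := a) (l := t))

lemma enc_image {k : ℕ} {s : Finset ℕ} (hne : s.Nonempty) (hcard : s.card ≤ k) :
    (Finset.range k).image (enc s) = s := by
  apply Finset.Subset.antisymm
  · intro x hx
    rcases Finset.mem_image.mp hx with ⟨j, _, rfl⟩
    exact enc_mem hne j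
  · intro x hx
    have hx' : x ∈ s.toList := Finset.mem_toList.mpr hx
    rcases List.mem_iff_getElem.mp hx' with ⟨n, hn, he⟩
    refine Finset.mem_image.mpr ⟨n, Finset.mem_range.mpr ?_, ?_⟩
    · have := Finset.length_toList s; omega
    · unfold enc
      rw [List.getD_eq_getElem _ _ hn, he]

/-- If `H` is the step-up of `G`, then `α(H) ≤ N ^ α(G) + 1`: every independent set of
the step-up hypergraph has size at most `N ^ α(G) + 1`. -/
theorem stepUp_indepNum {N : ℕ} (G : SimpleGraph (Fin N)) (S : Finset (Fin N → Bool))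
    (hS : ∀ a ∈ S, ∀ b ∈ S, ∀ c ∈ S, lexLt a b → lexLt b c → ¬ stepEdge G a b c) :
    S.card ≤ N ^ indepNum G + 1 := by
  classical
  rcases le_or_gt S.card 1 with hm1 | hm1
  · exact le_trans hm1 (by omega)
  set m := S.card with hm
  -- N is positive
  have hN : 0 < N := by
    by_contra hN
    push_neg at hN
    have hN0 : N = 0 := by omega
    subst hN0
    have : S.card ≤ 1 := Finset.card_le_one.mpr (fun a _ b _ => funext fun i => i.elim0)
    omega
  -- the independence-number set is bounded above and contains 1
  have hbdd : BddAbove {n : ℕ | ∃ T : Finset (Fin N), T.card = n ∧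
      ∀ u ∈ T, ∀ v ∈ T, ¬ G.Adj u v} := by
    refine ⟨N, ?_⟩
    rintro n ⟨T, rfl, -⟩
    simpa using Finset.card_le_univ T
  have hk1 : 1 ≤ indepNum G := by
    refine le_csSup hbdd ⟨{⟨0, hN⟩}, by simp, ?_⟩
    intro u hu v hv
    simp only [Finset.mem_singleton] at hu hv
    subst hu; subst hv
    exact G.irrefl
  set k := indepNum G with hkdef
  -- sorted enumeration
  obtain ⟨g, hgmem, hg⟩ := exists_lex_enum S
  rw [← hm] at hgmem hg
  -- basic facts about Dd
  have hDlt : ∀ t, t + 1 < m → Dd g t < N := by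
    intro t ht
    exact delta_lt (lexLt_ne (hg t (t + 1) (by omega) ht))
  -- independence of Phi values
  have hkey : ∀ i, i + 2 ≤ m → ∀ p q, p ≤ i → q ≤ i → p < q →
      (∀ t, p < t → t ≤ i → Dd g p < Dd g t) → (∀ t, q < t → t ≤ i → Dd g q < Dd g t) →
      ∀ (h1 : Dd g p < N) (h2 : Dd g q < N), ¬ G.Adj ⟨Dd g p, h1⟩ ⟨Dd g q, h2⟩ := by
    intro i hi p q hp hq hpq hcp hcq h1 h2 hadj
    have hDpq : Dd g p < Dd g q := hcp q hpq hq
    have hd1 : delta (g p) (g q) = Dd g p :=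
      chain_delta_eq hg p q hpq (by omega) (fun t ht1 ht2 => le_of_lt (hcp t ht1 (by omega)))
    have hlex1 : lexLt (g p) (g q) := hg p q hpq (by omega)
    have hlex2 : lexLt (g q) (g (q + 1)) := hg q (q + 1) (by omega) (by omega)
    refine hS (g p) (hgmem p (by omega)) (g q) (hgmem q (by omega)) (g (q + 1))
      (hgmem (q + 1) (by omega)) hlex1 hlex2 ?_
    unfold stepEdge
    have hd2 : delta (g q) (g (q + 1)) = Dd g q := rfl
    rw [hd1, hd2]
    exact ⟨hDpq, h1, h2, hadj⟩
  -- each Phi is small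
  have hPhilt : ∀ i, i + 2 ≤ m → ∀ x ∈ Phi g i, x < N := by
    intro i hi x hx
    obtain ⟨p, hp1, _, rfl⟩ := mem_Phi.mp hx
    exact hDlt p (by omega)
  have hPhicard : ∀ i, i + 2 ≤ m → (Phi g i).card ≤ k := by
    intro i hi
    set T := (Phi g i).attachFin (hPhilt i hi) with hT
    have hTcard : T.card = (Phi g i).card := Finset.card_attachFin _ _
    have hTind : ∀ u ∈ T, ∀ v ∈ T, ¬ G.Adj u v := by
      intro u hu v hv
      rw [hT, Finset.mem_attachFin] at hu hv
      obtain ⟨p, hp1, hp2, hp3⟩ := mem_Phi.mp hu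
      obtain ⟨q, hq1, hq2, hq3⟩ := mem_Phi.mp hv
      have hu' : u = ⟨Dd g p, hp3 ▸ u.2⟩ := Fin.ext hp3.symm
      have hv' : v = ⟨Dd g q, hq3 ▸ v.2⟩ := Fin.ext hq3.symm
      rcases lt_trichotomy p q with h | h | h
      · rw [hu', hv']
        exact hkey i hi p q hp1 hq1 h hp2 hq2 _ _
      · subst h
        have : u = v := Fin.ext (hp3.symm ▸ hq3.symm ▸ rfl)
        subst this
        exact G.irrefl
      · rw [hu', hv']
        intro hadj
        exact hkey i hi q p hq1 hp1 h hq2 hp2 _ _ hadj.symm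
    calc (Phi g i).card = T.card := hTcard.symm
      _ ≤ k := le_csSup hbdd ⟨T, rfl, hTind⟩
  -- injectivity of Phi
  have hPhiInj : ∀ i i', i < i' → i' + 2 ≤ m → Phi g i ≠ Phi g i' := by
    intro i i' hii' hi' heq
    -- the minimum of Dd over (i, i']
    have hIcc : (Finset.Icc (i + 1) i').Nonempty := ⟨i', by simp; omega⟩
    set b := (Finset.Icc (i + 1) i').inf' hIcc (Dd g) with hb
    have hble : ∀ t ∈ Finset.Icc (i + 1) i', b ≤ Dd g t := fun t ht =>
      Finset.inf'_le _ ht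
    obtain ⟨q0, hq0mem, hq0⟩ := Finset.exists_mem_eq_inf' hIcc (Dd g)
    -- the last achiever of the min
    have hAch : ((Finset.Icc (i + 1) i').filter (fun t => Dd g t = b)).Nonempty :=
      ⟨q0, Finset.mem_filter.mpr ⟨hq0mem, hq0.symm⟩⟩
    set q := ((Finset.Icc (i + 1) i').filter (fun t => Dd g t = b)).max' hAch with hqdef
    have hqmem : q ∈ (Finset.Icc (i + 1) i').filter (fun t => Dd g t = b) :=
      Finset.max'_mem _ _
    rw [Finset.mem_filter, Finset.mem_Icc] at hqmem
    obtain ⟨⟨hq1, hq2⟩, hq3⟩ := hqmem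
    have hqlast : ∀ t, q < t → t ≤ i' → b < Dd g t := by
      intro t ht1 ht2
      have htmem : t ∈ Finset.Icc (i + 1) i' := Finset.mem_Icc.mpr ⟨by omega, ht2⟩
      rcases lt_or_eq_of_le (hble t htmem) with h | h
      · exact h
      · exfalso
        have hmemf : t ∈ (Finset.Icc (i + 1) i').filter (fun s => Dd g s = b) :=
          Finset.mem_filter.mpr ⟨htmem, h.symm⟩
        have : t ≤ q := by
          rw [hqdef]
          exact Finset.le_max' _ t hmemf
        omega
    -- b ∈ Phi g i'
    have hbmem : b ∈ Phi g i' := mem_Phi.mpr ⟨q, hq2, fun t ht1 ht2 =>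
      hq3 ▸ hqlast t ht1 ht2, hq3⟩
    -- b ∉ Phi g i
    rw [← heq] at hbmem
    obtain ⟨p, hp1, hp2, hp3⟩ := mem_Phi.mp hbmem
    have hpq : p < q := by omega
    have hd1 : delta (g p) (g q) = Dd g p := by
      refine chain_delta_eq hg p q hpq (by omega) ?_
      intro t ht1 ht2
      rcases le_or_gt t i with h | h
      · exact le_of_lt (hp2 t ht1 h)
      · rw [hp3]
        exact hble t (Finset.mem_Icc.mpr ⟨by omega, by omega⟩)
    have hlex1 : lexLt (g p) (g q) := hg p q hpq (by omega)
    have hlex2 : lexLt (g q) (g (q + 1)) := hg q (q + 1) (by omega) (by omega)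
    have hne := (delta_step hlex1 hlex2).1
    apply hne
    rw [hd1, hp3]
    exact hq3.symm
  -- the injection into Fin k → Fin N
  have hmain : m - 1 ≤ N ^ k := by
    have hJlt : ∀ i, i + 2 ≤ m → ∀ j : ℕ, enc (Phi g i) j < N := by
      intro i hi j
      exact hPhilt i hi _ (enc_mem ⟨_, self_mem_Phi⟩ j)
    have hcount := Finset.card_le_card_of_injOn
      (f := fun i => fun j : Fin k =>
        (⟨if hi : i + 2 ≤ m then enc (Phi g i) j else 0, by
          split
          · exact hJlt i (by assumption) j
          · exact hN⟩ : Fin N))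
      (s := Finset.range (m - 1)) (t := (Finset.univ : Finset (Fin k → Fin N)))
      (fun a _ => Finset.mem_univ _) ?_
    · rw [Finset.card_range] at hcount
      calc m - 1 ≤ Fintype.card (Fin k → Fin N) := by
            simpa using hcount
        _ = N ^ k := by simp
    · intro i hi i' hi' he
      simp only [Finset.coe_range, Set.mem_Iio] at hi hi'
      have hi2 : i + 2 ≤ m := by omega
      have hi2' : i' + 2 ≤ m := by omega
      by_contra hne
      have hkey2 : Phi g i ≠ Phi g i' := by
        rcases lt_or_gt_of_ne hne with h | h
        · exact hPhiInj i i' h hi2'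
        · exact fun hh => hPhiInj i' i h hi2 hh.symm
      apply hkey2
      have : ∀ j ∈ Finset.range k, enc (Phi g i) j = enc (Phi g i') j := by
        intro j hj
        have := congrFun he ⟨j, Finset.mem_range.mp hj⟩
        simp only [hi2, hi2', dif_pos] at this
        exact congrArg Fin.val this
      calc Phi g i = (Finset.range k).image (enc (Phi g i)) :=
            (enc_image ⟨_, self_mem_Phi⟩ (hPhicard i hi2)).symm
        _ = (Finset.range k).image (enc (Phi g i')) := Finset.image_congr
            (fun j hj => this j hj)
        _ = Phi g i' := enc_image ⟨_, self_mem_Phi⟩ (hPhicard i' hi2')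
  omega
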